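/- With f_i(y) defined by the recurrence f_1(y) = h/(y−1) and f_i(y) = (−y/(y−1)) · Σ_{j=1}^{i−1} f_j(y) C(k−j, i−j) for i ≥ 2, each f_i(y) has the form φ_i(y)/(y−1)^i where φ_i ∈ ℚ[y] is a polynomial of degree at most i−1 with φ_i(0) = 0 for i ≥ 2 and φ_1(0) = h; moreover if h ∈ ℤ then φ_i ∈ ℤ[y]. -/

import Mathlib

open Polynomial

noncomputable def intS : Subring (Polynomial ℚ) :=
  (Polynomial.mapRingHom (Int.castRingHom ℚ)).range

lemma intS_coeff {p : Polynomial ℚ} (hp : p ∈ intS) (n : ℕ) :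
    ∃ a : ℤ, p.coeff n = (a : ℚ) := by
  obtain ⟨q, rfl⟩ := hp
  exact ⟨q.coeff n, by simp⟩

lemma intS_X : (Polynomial.X : Polynomial ℚ) ∈ intS := ⟨Polynomial.X, by simp⟩

lemma intS_C_int (m : ℤ) : (Polynomial.C (m : ℚ)) ∈ intS :=
  ⟨Polynomial.C m, by simp⟩

theorem coefficients_shape
    (k : ℕ) (hk : 1 ≤ k) (h : ℚ) (f' : ℕ → RatFunc ℚ)
    (hf1 : f' 1 = algebraMap ℚ (RatFunc ℚ) h / (RatFunc.X - 1))
    (hrec : ∀ i : ℕ, 2 ≤ i →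
      f' i = (-RatFunc.X / (RatFunc.X - 1)) *
        ∑ j ∈ Finset.Icc 1 (i - 1), f' j * ((k - j).choose (i - j) : RatFunc ℚ)) :
    ∀ i : ℕ, 1 ≤ i → i ≤ k →
      ∃ φ : Polynomial ℚ,
        f' i = algebraMap (Polynomial ℚ) (RatFunc ℚ) φ / (RatFunc.X - 1) ^ i ∧
        φ.degree ≤ (i - 1 : ℕ) ∧
        (2 ≤ i → φ.eval 0 = 0) ∧
        (i = 1 → φ.eval 0 = h) ∧
        ((∃ m : ℤ, h = (m : ℚ)) → ∀ n : ℕ, ∃ a : ℤ, φ.coeff n = (a : ℚ)) := by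
  classical
  have hX1 : (RatFunc.X - 1 : RatFunc ℚ) ≠ 0 := by
    have h1 : (RatFunc.X - 1 : RatFunc ℚ)
        = algebraMap (Polynomial ℚ) (RatFunc ℚ) (Polynomial.X - 1) := by
      rw [map_sub, map_one, RatFunc.algebraMap_X]
    rw [h1]
    apply RatFunc.algebraMap_ne_zero
    have := Polynomial.X_sub_C_ne_zero (R := ℚ) 1
    simpa using this
  intro i
  induction i using Nat.strong_induction_on with
  | _ i ih =>
    intro hi1 hik
    rcases eq_or_lt_of_le hi1 with h1 | h2
    · -- i = 1
      subst h1
      refine ⟨Polynomial.C h, ?_, ?_, ?_, ?_, ?_⟩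
      · simpa [Polynomial.algebraMap_eq] using hf1
      · simpa using Polynomial.degree_C_le
      · omega
      · intro _; simp
      · rintro ⟨m, rfl⟩ n
        exact intS_coeff (intS_C_int m) n
    · -- 2 ≤ i
      have h2' : 2 ≤ i := h2
      set g : ℕ → Polynomial ℚ := fun j =>
        if hj : 1 ≤ j ∧ j < i then
          Classical.choose (ih j hj.2 hj.1 (by omega)) else 0 with hg
      have hgspec : ∀ j, 1 ≤ j → j < i →
          f' j = algebraMap (Polynomial ℚ) (RatFunc ℚ) (g j) / (RatFunc.X - 1) ^ j ∧
          (g j).degree ≤ (j - 1 : ℕ) ∧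
          (2 ≤ j → (g j).eval 0 = 0) ∧
          (j = 1 → (g j).eval 0 = h) ∧
          ((∃ m : ℤ, h = (m : ℚ)) → ∀ n : ℕ, ∃ a : ℤ, (g j).coeff n = (a : ℚ)) := by
        intro j hj1 hji
        have : g j = Classical.choose (ih j hji hj1 (by omega)) := by
          simp [hg, hj1, hji]
        rw [this]
        exact Classical.choose_spec (ih j hji hj1 (by omega))
      refine ⟨-Polynomial.X * ∑ j ∈ Finset.Icc 1 (i - 1),
        ((k - j).choose (i - j) : Polynomial ℚ) * g j * (Polynomial.X - 1) ^ (i - 1 - j),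
        ?_, ?_, ?_, ?_, ?_⟩
      · rw [hrec i h2']
        rw [eq_div_iff (pow_ne_zero i hX1)]
        have hpow : (RatFunc.X - 1 : RatFunc ℚ) ^ i
            = (RatFunc.X - 1) * (RatFunc.X - 1) ^ (i - 1) := by
          rw [← pow_succ']
          congr 1
          omega
        rw [hpow]
        have hsum : (∑ j ∈ Finset.Icc 1 (i - 1), f' j * ((k - j).choose (i - j) : RatFunc ℚ))
              * (RatFunc.X - 1) ^ (i - 1)
            = ∑ j ∈ Finset.Icc 1 (i - 1),
              algebraMap (Polynomial ℚ) (RatFunc ℚ)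
                (((k - j).choose (i - j) : Polynomial ℚ) * g j
                  * (Polynomial.X - 1) ^ (i - 1 - j)) := by
          rw [Finset.sum_mul]
          refine Finset.sum_congr rfl ?_
          intro j hj
          simp only [Finset.mem_Icc] at hj
          obtain ⟨hrep, _, _, _, _⟩ := hgspec j hj.1 (by omega)
          rw [hrep]
          have hsplit : (RatFunc.X - 1 : RatFunc ℚ) ^ (i - 1)
              = (RatFunc.X - 1) ^ j * (RatFunc.X - 1) ^ (i - 1 - j) := by
            rw [← pow_add]
            congr 1
            omega
          rw [hsplit]
          field_simp
          simp only [map_mul, map_pow, map_sub, map_one, map_natCast, RatFunc.algebraMap_X]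
          ring
        rw [map_mul, map_neg, RatFunc.algebraMap_X, map_sum, ← hsum]
        field_simp
      · -- degree
        refine le_trans (Polynomial.degree_mul_le _ _) ?_
        have hd1 : (-Polynomial.X : Polynomial ℚ).degree ≤ 1 := by
          simp [Polynomial.degree_neg]
        have hd2 : (∑ j ∈ Finset.Icc 1 (i - 1),
            ((k - j).choose (i - j) : Polynomial ℚ) * g j
              * (Polynomial.X - 1) ^ (i - 1 - j)).degree ≤ ((i - 2 : ℕ) : WithBot ℕ) := by
          refine le_trans (Polynomial.degree_sum_le _ _) ?_
          rw [Finset.sup_le_iff]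
          intro j hj
          simp only [Finset.mem_Icc] at hj
          obtain ⟨_, hdeg, _, _, _⟩ := hgspec j hj.1 (by omega)
          refine le_trans (Polynomial.degree_mul_le _ _) ?_
          refine le_trans (add_le_add (Polynomial.degree_mul_le _ _) (le_of_eq (Polynomial.degree_pow _ _))) ?_
          have hc : (((k - j).choose (i - j) : Polynomial ℚ)).degree ≤ 0 := by
            rw [← Polynomial.C_eq_natCast]
            exact Polynomial.degree_C_le
          have hx1 : (Polynomial.X - 1 : Polynomial ℚ).degree = 1 := by
            simpa using Polynomial.degree_X_sub_C (1 : ℚ)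
          rw [hx1]
          calc ((k - j).choose (i - j) : Polynomial ℚ).degree + (g j).degree
                + (i - 1 - j) • (1 : WithBot ℕ)
              ≤ 0 + ((j - 1 : ℕ) : WithBot ℕ) + ((i - 1 - j : ℕ) : WithBot ℕ) := by
                gcongr
                simp [nsmul_eq_mul]
            _ ≤ ((i - 2 : ℕ) : WithBot ℕ) := by
                rw [zero_add, ← Nat.cast_add, Nat.cast_le]
                omega
        calc (-Polynomial.X : Polynomial ℚ).degree + (_ : Polynomial ℚ).degree
            ≤ 1 + ((i - 2 : ℕ) : WithBot ℕ) := add_le_add hd1 hd2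
          _ ≤ ((i - 1 : ℕ) : WithBot ℕ) := by
              rw [show (1 : WithBot ℕ) = ((1 : ℕ) : WithBot ℕ) from rfl,
                ← Nat.cast_add, Nat.cast_le]
              omega
      · intro _; simp
      · omega
      · intro hm n
        refine intS_coeff ?_ n
        refine Subring.mul_mem _ (Subring.neg_mem _ intS_X) ?_
        refine Subring.sum_mem _ ?_
        intro j hj
        simp only [Finset.mem_Icc] at hj
        obtain ⟨_, _, _, _, hint⟩ := hgspec j hj.1 (by omega)
        refine Subring.mul_mem _ (Subring.mul_mem _ (natCast_mem _ _) ?_)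
          (Subring.pow_mem _ (Subring.sub_mem _ intS_X (Subring.one_mem _)) _)
        -- g j ∈ intS from coefficientwise integrality
        show g j ∈ (Polynomial.mapRingHom (Int.castRingHom ℚ)).range
        refine (Polynomial.mem_map_range _).mpr ?_
        intro n
        obtain ⟨a, ha⟩ := hint hm n
        exact ⟨a, ha.symm⟩
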